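/- Fix δ ∈ [0, 1) and define a sequence (θ_s)_{s≥0} by choosing θ_0 with 2δ ≤ θ_0 ≤ 1+δ and, recursively, θ_{s+1} = √((1+δ)/(1−δ)·θ_s² + θ_s⁴/(4(1−δ)²)) − θ_s²/(2(1−δ)) (the larger root of ((1−θ_{s+1}+δ)/(1−δ))·(1/θ_{s+1}²) = 1/θ_s²). Then: (1) boundedness: 2δ ≤ θ_s ≤ 1+δ for all s ≥ 0; (2) monotonicity: θ_{s+1} ≤ θ_s for all s ≥ 0; (3) contraction: 0 ≤ θ_{s+1} − 2δ ≤ (1−δ)(θ_s − 2δ) for all s ≥ 0, and hence θ_s ≤ 2δ + (1−δ)^s (θ_0 − 2δ) for all s; (4) if δ = 0 then θ_s ≤ 2/(s+2) for all s ≥ 0. -/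

import Mathlib

lemma step_quad (δ x t : ℝ) (hδ0 : 0 ≤ δ) (hδ1 : δ < 1)
    (ht : t = Real.sqrt ((1 + δ) / (1 - δ) * x ^ 2 + x ^ 4 / (4 * (1 - δ) ^ 2))
        - x ^ 2 / (2 * (1 - δ))) :
    0 ≤ t ∧ (1 - δ) * t ^ 2 + x ^ 2 * t = (1 + δ) * x ^ 2 := by
  have hc : (0:ℝ) < 1 - δ := by linarith
  have hne : (1:ℝ) - δ ≠ 0 := ne_of_gt hc
  have hAnn : 0 ≤ (1 + δ) / (1 - δ) * x ^ 2 + x ^ 4 / (4 * (1 - δ) ^ 2) := by positivity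
  have hBnn : 0 ≤ x ^ 2 / (2 * (1 - δ)) := by positivity
  have hB2 : (x ^ 2 / (2 * (1 - δ))) ^ 2 ≤ (1 + δ) / (1 - δ) * x ^ 2 + x ^ 4 / (4 * (1 - δ) ^ 2) := by
    have h1 : (x ^ 2 / (2 * (1 - δ))) ^ 2 = x ^ 4 / (4 * (1 - δ) ^ 2) := by
      field_simp; ring
    have h2 : 0 ≤ (1 + δ) / (1 - δ) * x ^ 2 := by positivity
    linarith
  have htnn : 0 ≤ t := by
    rw [ht, sub_nonneg]
    calc x ^ 2 / (2 * (1 - δ)) = Real.sqrt ((x ^ 2 / (2 * (1 - δ))) ^ 2) := by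
          rw [Real.sqrt_sq hBnn]
      _ ≤ _ := Real.sqrt_le_sqrt hB2
  have hsq : (t + x ^ 2 / (2 * (1 - δ))) ^ 2
      = (1 + δ) / (1 - δ) * x ^ 2 + x ^ 4 / (4 * (1 - δ) ^ 2) := by
    rw [ht, sub_add_cancel]
    exact Real.sq_sqrt hAnn
  refine ⟨htnn, ?_⟩
  field_simp at hsq
  have key : ((1 - δ) * t ^ 2 + x ^ 2 * t - (1 + δ) * x ^ 2) * (16 * (1 - δ) ^ 4) = 0 := by
    linear_combination (1 - δ) ^ 3 * hsq
  have h16 : (16 * (1 - δ) ^ 4) ≠ 0 := by positivity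
  have := mul_eq_zero.mp key
  rcases this with h | h
  · linarith
  · exact absurd h h16


lemma step_lower (δ x t : ℝ) (hδ0 : 0 ≤ δ) (hδ1 : δ < 1) (ht : 0 ≤ t)
    (heq : (1 - δ) * t ^ 2 + x ^ 2 * t = (1 + δ) * x ^ 2)
    (hxl : 2 * δ ≤ x) : 2 * δ ≤ t := by
  by_contra h
  push_neg at h
  have hδpos : 0 < δ := by linarith
  have h1 : 0 < (1 - δ) * (t + 2 * δ) + x ^ 2 := by nlinarith
  have key : (2 * δ - t) * ((1 - δ) * (t + 2 * δ) + x ^ 2)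
      = (1 - δ) * (2 * δ - x) * (2 * δ + x) := by linear_combination -heq
  nlinarith [mul_pos (by linarith : (0:ℝ) < 2 * δ - t) h1,
    mul_nonneg (mul_nonneg (by linarith : (0:ℝ) ≤ 1 - δ) (by linarith : (0:ℝ) ≤ x - 2*δ)) (by linarith : (0:ℝ) ≤ 2*δ + x)]

lemma step_le (δ x t : ℝ) (hδ0 : 0 ≤ δ) (hδ1 : δ < 1) (ht : 0 ≤ t)
    (heq : (1 - δ) * t ^ 2 + x ^ 2 * t = (1 + δ) * x ^ 2)
    (hxl : 2 * δ ≤ x) (hx : 0 ≤ x) : t ≤ x := by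
  by_contra h
  push_neg at h
  have htpos : 0 < t := lt_of_le_of_lt hx h
  have h1 : 0 < (1 - δ) * (t + x) + x ^ 2 := by nlinarith
  have key : (t - x) * ((1 - δ) * (t + x) + x ^ 2) = x ^ 2 * (2 * δ - x) := by
    linear_combination heq
  nlinarith [mul_pos (by linarith : (0:ℝ) < t - x) h1,
    mul_nonneg (sq_nonneg x) (by linarith : (0:ℝ) ≤ x - 2*δ)]

lemma step_contr (δ x t : ℝ) (hδ0 : 0 ≤ δ) (hδ1 : δ < 1) (ht : 0 ≤ t)
    (heq : (1 - δ) * t ^ 2 + x ^ 2 * t = (1 + δ) * x ^ 2)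
    (hxl : 2 * δ ≤ x) : t - 2 * δ ≤ (1 - δ) * (x - 2 * δ) := by
  by_contra h
  push_neg at h
  set u : ℝ := 2 * δ + (1 - δ) * (x - 2 * δ) with hu
  have hunn : 0 ≤ u := by nlinarith
  have htu : u < t := by rw [hu]; linarith
  have htpos : 0 < t := lt_of_le_of_lt hunn htu
  have h1 : 0 < (1 - δ) * (t + u) + x ^ 2 := by nlinarith
  have key : (t - u) * ((1 - δ) * (t + u) + x ^ 2)
      = -((1 - δ) * (x - 2 * δ) ^ 2 * (x + δ ^ 2)) := by
    rw [hu]; linear_combination heq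
  nlinarith [mul_pos (by linarith : (0:ℝ) < t - u) h1,
    mul_nonneg (mul_nonneg (by linarith : (0:ℝ) ≤ 1 - δ) (sq_nonneg (x - 2*δ))) (by nlinarith : (0:ℝ) ≤ x + δ^2)]

lemma step_zero (x t n : ℝ) (hn : 0 ≤ n) (ht : 0 ≤ t) (hx : 0 ≤ x)
    (heq : t ^ 2 + x ^ 2 * t = x ^ 2) (hxu : x ≤ 2 / (n + 2)) : t ≤ 2 / (n + 3) := by
  have h2 : (0:ℝ) < n + 2 := by linarith
  have h3 : (0:ℝ) < n + 3 := by linarith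
  have hx2 : x * (n + 2) ≤ 2 := by
    rw [div_eq_mul_inv] at hxu
    calc x * (n + 2) ≤ 2 * (n + 2)⁻¹ * (n + 2) := by
          apply mul_le_mul_of_nonneg_right hxu h2.le
      _ = 2 := by field_simp
  by_contra h
  push_neg at h
  set u : ℝ := 2 / (n + 3) with hu
  have hupos : 0 < u := by positivity
  have hu3 : u * (n + 3) = 2 := by rw [hu]; field_simp
  have hx2sq : x ^ 2 * (n + 2) ^ 2 ≤ 4 := by nlinarith [mul_nonneg hx h2.le]
  -- g(u) > 0
  have hg : 0 < u ^ 2 + x ^ 2 * u - x ^ 2 := by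
    have hD : (0:ℝ) < (n + 3) ^ 2 * (n + 2) ^ 2 := by positivity
    have e1 : u ^ 2 * (n + 3) ^ 2 = 4 := by rw [hu]; field_simp; norm_num
    have e3 : x ^ 2 * u * (n + 3) = 2 * x ^ 2 := by rw [hu]; field_simp
    have hP : (0:ℝ) ≤ (n + 1) * (n + 3) * (4 - x ^ 2 * (n + 2) ^ 2) :=
      mul_nonneg (mul_nonneg (by linarith) (by linarith)) (by linarith)
    have hgD : (u ^ 2 + x ^ 2 * u - x ^ 2) * ((n + 3) ^ 2 * (n + 2) ^ 2) ≥ 4 := by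
      nlinarith [e1, e3, hP, sq_nonneg (n+2), mul_nonneg (mul_nonneg hn hn) hn]
    nlinarith [hgD, hD]
  have key : (t - u) * (t + u + x ^ 2) = -(u ^ 2 + x ^ 2 * u - x ^ 2) := by
    linear_combination heq
  nlinarith [mul_pos (by linarith : (0:ℝ) < t - u) (by nlinarith [sq_nonneg x] : (0:ℝ) < t + u + x ^ 2)]

/-- Fix `δ ∈ [0,1)` and a sequence `(θ_s)` with `2δ ≤ θ_0 ≤ 1+δ` and
`θ_{s+1} = √((1+δ)/(1-δ)·θ_s² + θ_s⁴/(4(1-δ)²)) - θ_s²/(2(1-δ))` (the larger root of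
`((1-θ_{s+1}+δ)/(1-δ))/θ_{s+1}² = 1/θ_s²`).  Then:
(1) `2δ ≤ θ_s ≤ 1+δ` for all `s`; (2) `θ_{s+1} ≤ θ_s`;
(3) `0 ≤ θ_{s+1} - 2δ ≤ (1-δ)(θ_s - 2δ)`, hence `θ_s ≤ 2δ + (1-δ)^s (θ_0 - 2δ)`;
(4) if `δ = 0` then `θ_s ≤ 2/(s+2)`. -/
theorem statement19 (δ : ℝ) (hδ0 : 0 ≤ δ) (hδ1 : δ < 1)
    (θ : ℕ → ℝ)
    (hθ0l : 2 * δ ≤ θ 0) (hθ0u : θ 0 ≤ 1 + δ)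
    (hrec : ∀ s : ℕ,
      θ (s + 1) =
        Real.sqrt ((1 + δ) / (1 - δ) * θ s ^ 2 + θ s ^ 4 / (4 * (1 - δ) ^ 2))
          - θ s ^ 2 / (2 * (1 - δ))) :
    (∀ s : ℕ, 2 * δ ≤ θ s ∧ θ s ≤ 1 + δ) ∧
    (∀ s : ℕ, θ (s + 1) ≤ θ s) ∧
    (∀ s : ℕ, 0 ≤ θ (s + 1) - 2 * δ ∧ θ (s + 1) - 2 * δ ≤ (1 - δ) * (θ s - 2 * δ)) ∧
    (∀ s : ℕ, θ s ≤ 2 * δ + (1 - δ) ^ s * (θ 0 - 2 * δ)) ∧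
    (δ = 0 → ∀ s : ℕ, θ s ≤ 2 / ((s : ℝ) + 2)) := by
  have hstep : ∀ s : ℕ, 0 ≤ θ (s + 1) ∧
      (1 - δ) * θ (s + 1) ^ 2 + θ s ^ 2 * θ (s + 1) = (1 + δ) * θ s ^ 2 :=
    fun s => step_quad δ (θ s) (θ (s + 1)) hδ0 hδ1 (hrec s)
  have bound : ∀ s : ℕ, 2 * δ ≤ θ s ∧ θ s ≤ 1 + δ := by
    intro s
    induction s with
    | zero => exact ⟨hθ0l, hθ0u⟩
    | succ s ih =>
      obtain ⟨hl, hu⟩ := ih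
      obtain ⟨htnn, heq⟩ := hstep s
      have hx : 0 ≤ θ s := le_trans (by linarith) hl
      have h1 : 2 * δ ≤ θ (s + 1) := step_lower δ (θ s) (θ (s + 1)) hδ0 hδ1 htnn heq hl
      have h2 : θ (s + 1) ≤ θ s := step_le δ (θ s) (θ (s + 1)) hδ0 hδ1 htnn heq hl hx
      exact ⟨h1, le_trans h2 hu⟩
  have mono : ∀ s : ℕ, θ (s + 1) ≤ θ s := by
    intro s
    obtain ⟨hl, hu⟩ := bound s
    obtain ⟨htnn, heq⟩ := hstep s
    exact step_le δ (θ s) (θ (s + 1)) hδ0 hδ1 htnn heq hl (le_trans (by linarith) hl)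
  have contr : ∀ s : ℕ, 0 ≤ θ (s + 1) - 2 * δ ∧
      θ (s + 1) - 2 * δ ≤ (1 - δ) * (θ s - 2 * δ) := by
    intro s
    obtain ⟨hl, hu⟩ := bound s
    obtain ⟨htnn, heq⟩ := hstep s
    obtain ⟨hl', _⟩ := bound (s + 1)
    exact ⟨by linarith, step_contr δ (θ s) (θ (s + 1)) hδ0 hδ1 htnn heq hl⟩
  have geom : ∀ s : ℕ, θ s ≤ 2 * δ + (1 - δ) ^ s * (θ 0 - 2 * δ) := by
    intro s
    induction s with
    | zero => simp
    | succ s ih =>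
      obtain ⟨_, h2⟩ := contr s
      have hpow : (0:ℝ) ≤ (1 - δ) ^ s := pow_nonneg (by linarith) s
      have hc : (0:ℝ) ≤ 1 - δ := by linarith
      calc θ (s + 1) ≤ 2 * δ + (1 - δ) * (θ s - 2 * δ) := by linarith
        _ ≤ 2 * δ + (1 - δ) * ((1 - δ) ^ s * (θ 0 - 2 * δ)) := by
            have := mul_le_mul_of_nonneg_left (by linarith : θ s - 2 * δ ≤ (1 - δ) ^ s * (θ 0 - 2 * δ)) hc
            linarith
        _ = 2 * δ + (1 - δ) ^ (s + 1) * (θ 0 - 2 * δ) := by ring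
  refine ⟨bound, mono, contr, geom, ?_⟩
  intro hδ s
  subst hδ
  induction s with
  | zero => norm_num; linarith
  | succ s ih =>
    obtain ⟨htnn, heq⟩ := hstep s
    obtain ⟨hl, _⟩ := bound s
    have hx : 0 ≤ θ s := by linarith
    have heq' : θ (s + 1) ^ 2 + θ s ^ 2 * θ (s + 1) = θ s ^ 2 := by linarith
    have := step_zero (θ s) (θ (s + 1)) (s : ℝ) (Nat.cast_nonneg s) htnn hx heq' ih
    have hcast : ((s + 1 : ℕ) : ℝ) + 2 = (s : ℝ) + 3 := by push_cast; ring
    rw [hcast]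
    exact this
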